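/- Let Λ = (L, 𝔐, ⊨) be a satisfaction system. If a model change operation ⊕ : 𝒫_fin(L) × 𝒫(𝔐) → 𝒫_fin(L) satisfies persistence (Mod(B) ⊆ Mod(⊕(B,M))) and finite temperance (for every M' with Mod(B) ∪ M ⊆ M' ⊊ Mod(⊕(B,M)), M' is not finitely representable), then it satisfies vacuity: if M ⊆ Mod(B) then Mod(⊕(B,M)) = Mod(B). -/
import Mathlib


variable {α β : Type*}

def ModelsOf (sat : β → Set α → Prop) (B : Set α) : Set β := {m | sat m B}

def FRsets (sat : β → Set α → Prop) : Set (Set β) :=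
  {X | ∃ B : Set α, B.Finite ∧ ModelsOf sat B = X}

def FRsubs (sat : β → Set α → Prop) (M : Set β) : Set (Set β) :=
  {X | X ∈ FRsets sat ∧ X ⊆ M ∧ ¬ ∃ Y ∈ FRsets sat, X ⊂ Y ∧ Y ⊆ M}

def FRsups (sat : β → Set α → Prop) (M : Set β) : Set (Set β) :=
  {X | X ∈ FRsets sat ∧ M ⊆ X ∧ ¬ ∃ Y ∈ FRsets sat, M ⊆ Y ∧ Y ⊂ X}

theorem stmt1 (sat : β → Set α → Prop) (f : Set α → Set β → Set α)
    (hfin : ∀ B M, (f B M).Finite)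
    (hpers : ∀ (B : Set α) (M : Set β), B.Finite →
      ModelsOf sat B ⊆ ModelsOf sat (f B M))
    (htemp : ∀ (B : Set α) (M : Set β), B.Finite → ∀ M' : Set β,
      ModelsOf sat B ∪ M ⊆ M' → M' ⊂ ModelsOf sat (f B M) → M' ∉ FRsets sat) :
    ∀ (B : Set α) (M : Set β), B.Finite → M ⊆ ModelsOf sat B →
      ModelsOf sat (f B M) = ModelsOf sat B := by
  intro B M hB hM
  by_contra hne
  exact htemp B M hB (ModelsOf sat B) (Set.union_subset (subset_refl _) hM)
    ⟨hpers B M hB, fun h => hne (subset_antisymm h (hpers B M hB))⟩ ⟨B, hB, rfl⟩
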